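/- arXiv:2402.04076 — 2 statements merged into one kernel-verified Lean document; each statement's English description precedes it below -/
import Mathlib

section
/- Let n ≥ 1 be an integer and let c₁, c₂, c₃, c₄ be positive reals. Then there exist positive constants c₅, c₆ depending only on n, c₁, c₂, c₃, c₄ (and not on s) with the following property: for every s ∈ (0,2) and every measurable H : ℝⁿ × ℝⁿ × (0,∞) → ℝ satisfying c₁ t^{−n/2} e^{−|x−y|²/(c₂ t)} ≤ H(x,y,t) ≤ c₃ t^{−n/2} e^{−|x−y|²/(c₄ t)} for all x, y ∈ ℝⁿ and t > 0, the kernel K_s(x,y) := (s/2)/Γ(1−s/2) · ∫₀^∞ H(x,y,t) t^{−1−s/2} dt satisfies c₅ · α_{n,s}/|x−y|^{n+s} ≤ K_s(x,y) ≤ c₆ · α_{n,s}/|x−y|^{n+s} for all x ≠ y in ℝⁿ. -/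
open MeasureTheory Real Set

/-- `α_{n,s} = s 2^{s-1} Γ((n+s)/2) / (π^{n/2} Γ(1-s/2))`. -/
noncomputable def alphaConst (n : ℕ) (s : ℝ) : ℝ :=
  s * 2 ^ (s - 1) * Real.Gamma (((n : ℝ) + s) / 2) /
    (Real.pi ^ ((n : ℝ) / 2) * Real.Gamma (1 - s / 2))

lemma ptwise_inv {p a : ℝ} {x : ℝ} (hx : (0:ℝ) < x) :
    (|(-1:ℝ)| * x ^ ((-1:ℝ) - 1)) •
        ((fun y => y ^ (p-1) * Real.exp (-(a*y))) (x ^ (-1:ℝ)))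
      = Real.exp (-(a/x)) * x ^ (-p - 1) := by
  simp only [abs_neg, abs_one, one_mul, smul_eq_mul]
  rw [← Real.rpow_mul hx.le, Real.rpow_neg_one, ← div_eq_mul_inv]
  rw [show (-1:ℝ) * (p - 1) = 1 - p by ring]
  rw [mul_comm (x ^ ((-1:ℝ) - 1)), mul_assoc, mul_comm (Real.exp (-(a/x))),
    ← mul_assoc, ← Real.rpow_add hx, mul_comm]
  norm_num
  ring_nf

lemma int_eq {p a : ℝ} (hp : 0 < p) (ha : 0 < a) :
    ∫ t in Ioi (0:ℝ), Real.exp (-(a/t)) * t ^ (-p - 1) = Real.Gamma p / a ^ p := by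
  have h := integral_comp_rpow_Ioi (fun y => y ^ (p-1) * Real.exp (-(a*y))) (p := -1)
    (by norm_num)
  rw [integral_rpow_mul_exp_neg_mul_Ioi hp ha] at h
  rw [← setIntegral_congr_fun measurableSet_Ioi (fun x hx => ptwise_inv (p := p) (a := a) hx), h,
    one_div, Real.inv_rpow ha.le, inv_mul_eq_div]

lemma int_integrable {p a : ℝ} (hp : 0 < p) (ha : 0 < a) :
    IntegrableOn (fun t => Real.exp (-(a/t)) * t ^ (-p - 1)) (Ioi (0:ℝ)) := by
  have hbase : IntegrableOn (fun y : ℝ => y ^ (p-1) * Real.exp (-(a*y))) (Ioi 0) := by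
    have := integrableOn_rpow_mul_exp_neg_mul_rpow (s := p - 1) (p := 1) (b := a)
      (by linarith) (by norm_num) ha
    simpa [Real.rpow_one] using this
  have h := (integrableOn_Ioi_comp_rpow_iff
    (fun y => y ^ (p-1) * Real.exp (-(a*y))) (p := -1) (by norm_num)).mpr hbase
  exact h.congr_fun (fun x hx => ptwise_inv hx) measurableSet_Ioi

lemma ptwise_gauss {n : ℕ} {s c k R : ℝ} {t : ℝ} (ht : (0:ℝ) < t) :
    k * t ^ (-(n:ℝ)/2) * Real.exp (-R ^ 2 / (c*t)) * t ^ (-1 - s/2)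
      = k * (Real.exp (-((R ^ 2 / c)/t)) * t ^ (-(((n:ℝ)+s)/2) - 1)) := by
  rw [show -R ^ 2 / (c*t) = -((R ^ 2 / c)/t) by rw [div_div]; ring_nf]
  rw [show -(((n:ℝ)+s)/2) - 1 = (-(n:ℝ)/2) + (-1 - s/2) by ring, Real.rpow_add ht]
  ring

lemma aux_eq {n : ℕ} {s c k R : ℝ} (hns : 0 < (n:ℝ) + s) (hc : 0 < c) (hR : 0 < R) :
    (∫ t in Ioi (0:ℝ), k * t ^ (-(n:ℝ)/2) * Real.exp (-R ^ 2 / (c*t)) * t ^ (-1 - s/2))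
      = k * Real.Gamma (((n:ℝ)+s)/2) * c ^ (((n:ℝ)+s)/2) / R ^ ((n:ℝ)+s) := by
  have hp : 0 < ((n:ℝ)+s)/2 := by linarith
  have ha : 0 < R ^ 2 / c := by positivity
  rw [setIntegral_congr_fun measurableSet_Ioi (fun t ht => ptwise_gauss (n := n) (s := s) ht),
    MeasureTheory.integral_const_mul, int_eq hp ha, div_rpow (by positivity) hc.le,
    ← Real.rpow_natCast R 2, ← Real.rpow_mul hR.le,
    show (2:ℕ) * (((n:ℝ)+s)/2) = (n:ℝ)+s by push_cast; ring,
    div_div_eq_mul_div]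
  ring

lemma aux_int {n : ℕ} {s c k R : ℝ} (hns : 0 < (n:ℝ) + s) (hc : 0 < c) (hR : 0 < R) :
    IntegrableOn
      (fun t => k * t ^ (-(n:ℝ)/2) * Real.exp (-R ^ 2 / (c*t)) * t ^ (-1 - s/2))
      (Ioi (0:ℝ)) := by
  have hp : 0 < ((n:ℝ)+s)/2 := by linarith
  have ha : 0 < R ^ 2 / c := by positivity
  have := (int_integrable hp ha).const_mul k
  exact IntegrableOn.congr_fun this (fun t ht => (ptwise_gauss ht).symm) measurableSet_Ioi

lemma hid_alpha {n : ℕ} {s k c R : ℝ} (hs : s ∈ Ioo (0:ℝ) 2) (hR : 0 < R) :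
    (s / 2) / Real.Gamma (1 - s / 2) *
        (k * Real.Gamma (((n:ℝ)+s)/2) * c ^ (((n:ℝ)+s)/2) / R ^ ((n:ℝ)+s))
      = (k * c ^ (((n:ℝ)+s)/2) * Real.pi ^ ((n:ℝ)/2) * (2:ℝ) ^ (-s)) *
          (alphaConst n s / R ^ ((n:ℝ)+s)) := by
  have hΓ1 : 0 < Real.Gamma (1 - s/2) := Real.Gamma_pos_of_pos (by linarith [hs.2])
  have hπ : (0:ℝ) < Real.pi ^ ((n:ℝ)/2) := Real.rpow_pos_of_pos Real.pi_pos _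
  have hRp : (0:ℝ) < R ^ ((n:ℝ)+s) := Real.rpow_pos_of_pos hR _
  have h2 : (2:ℝ) ^ (-s) * 2 ^ (s-1) = 1/2 := by
    rw [← Real.rpow_add two_pos, show -s + (s-1) = (-1:ℝ) by ring, Real.rpow_neg_one]
    norm_num
  unfold alphaConst
  rw [div_div, div_mul_div_comm, div_div, ← mul_div_assoc,
    div_eq_div_iff (mul_ne_zero (mul_ne_zero two_ne_zero hΓ1.ne') hRp.ne')
      (mul_ne_zero (mul_ne_zero hπ.ne' hΓ1.ne') hRp.ne')]
  linear_combination (-2 * s * k * Real.Gamma (((n:ℝ)+s)/2) * c ^ (((n:ℝ)+s)/2) *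
    Real.pi ^ ((n:ℝ)/2) * Real.Gamma (1 - s/2) * R ^ ((n:ℝ)+s)) * h2

lemma rpow_min_le {c : ℝ} (hc : 0 < c) {n : ℕ} {s : ℝ} (hs0 : 0 < s) (hs2 : s < 2) :
    min (c ^ ((n:ℝ)/2)) (c ^ (((n:ℝ)+2)/2)) ≤ c ^ (((n:ℝ)+s)/2) := by
  rcases le_or_gt 1 c with h | h
  · exact (min_le_left _ _).trans (Real.rpow_le_rpow_of_exponent_le h (by linarith))
  · exact (min_le_right _ _).trans (Real.rpow_le_rpow_of_exponent_ge hc h.le (by linarith))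

lemma rpow_le_max {c : ℝ} (hc : 0 < c) {n : ℕ} {s : ℝ} (hs0 : 0 < s) (hs2 : s < 2) :
    c ^ (((n:ℝ)+s)/2) ≤ max (c ^ ((n:ℝ)/2)) (c ^ (((n:ℝ)+2)/2)) := by
  rcases le_or_gt 1 c with h | h
  · exact (Real.rpow_le_rpow_of_exponent_le h (by linarith)).trans (le_max_right _ _)
  · exact (Real.rpow_le_rpow_of_exponent_ge hc h.le (by linarith)).trans (le_max_left _ _)

/-- Two-sided Gaussian bounds for a heat kernel imply two-sided bounds, comparable to the
Euclidean fractional kernel, for the associated fractional singular kernel; the comparison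
constants depend only on `n, c₁, c₂, c₃, c₄` and not on `s`. -/
theorem kernel_comparability (n : ℕ) (hn : 1 ≤ n) (c₁ c₂ c₃ c₄ : ℝ)
    (hc₁ : 0 < c₁) (hc₂ : 0 < c₂) (hc₃ : 0 < c₃) (hc₄ : 0 < c₄) :
    ∃ c₅ c₆ : ℝ, 0 < c₅ ∧ 0 < c₆ ∧
      ∀ s : ℝ, s ∈ Ioo (0:ℝ) 2 →
      ∀ H : EuclideanSpace ℝ (Fin n) → EuclideanSpace ℝ (Fin n) → ℝ → ℝ,
        Measurable (fun p : EuclideanSpace ℝ (Fin n) × EuclideanSpace ℝ (Fin n) × ℝ =>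
          H p.1 p.2.1 p.2.2) →
        (∀ (x y : EuclideanSpace ℝ (Fin n)) (t : ℝ), 0 < t →
          c₁ * t ^ (-(n : ℝ) / 2) * Real.exp (-‖x - y‖ ^ 2 / (c₂ * t)) ≤ H x y t ∧
            H x y t ≤ c₃ * t ^ (-(n : ℝ) / 2) * Real.exp (-‖x - y‖ ^ 2 / (c₄ * t))) →
        ∀ x y : EuclideanSpace ℝ (Fin n), x ≠ y →
          c₅ * (alphaConst n s / ‖x - y‖ ^ ((n : ℝ) + s)) ≤
              (s / 2) / Real.Gamma (1 - s / 2) *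
                ∫ t in Ioi (0:ℝ), H x y t * t ^ (-1 - s / 2) ∧
            (s / 2) / Real.Gamma (1 - s / 2) *
                ∫ t in Ioi (0:ℝ), H x y t * t ^ (-1 - s / 2) ≤
              c₆ * (alphaConst n s / ‖x - y‖ ^ ((n : ℝ) + s)) := by
  have hπ : (0:ℝ) < Real.pi ^ ((n:ℝ)/2) := Real.rpow_pos_of_pos Real.pi_pos _
  have hm₂ : (0:ℝ) < min (c₂ ^ ((n:ℝ)/2)) (c₂ ^ (((n:ℝ)+2)/2)) :=
    lt_min (Real.rpow_pos_of_pos hc₂ _) (Real.rpow_pos_of_pos hc₂ _)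
  have hm₄ : (0:ℝ) < max (c₄ ^ ((n:ℝ)/2)) (c₄ ^ (((n:ℝ)+2)/2)) :=
    lt_max_of_lt_left (Real.rpow_pos_of_pos hc₄ _)
  refine ⟨c₁ * min (c₂ ^ ((n:ℝ)/2)) (c₂ ^ (((n:ℝ)+2)/2)) * Real.pi ^ ((n:ℝ)/2) / 4,
          c₃ * max (c₄ ^ ((n:ℝ)/2)) (c₄ ^ (((n:ℝ)+2)/2)) * Real.pi ^ ((n:ℝ)/2),
          by positivity, by positivity, ?_⟩
  intro s hs H hHmeas hHB x y hxy
  obtain ⟨hs0, hs2⟩ := hs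
  set R := ‖x - y‖ with hRdef
  have hR : 0 < R := by
    rw [hRdef]; exact norm_pos_iff.mpr (sub_ne_zero.mpr hxy)
  have hns : 0 < (n:ℝ) + s := by positivity
  have hp : 0 < ((n:ℝ)+s)/2 := by linarith
  have hΓp : 0 < Real.Gamma (((n:ℝ)+s)/2) := Real.Gamma_pos_of_pos hp
  have hΓ1 : 0 < Real.Gamma (1 - s/2) := Real.Gamma_pos_of_pos (by linarith)
  have hRp : (0:ℝ) < R ^ ((n:ℝ)+s) := Real.rpow_pos_of_pos hR _
  have hα : 0 < alphaConst n s := by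
    unfold alphaConst
    exact div_pos (mul_pos (mul_pos hs0 (Real.rpow_pos_of_pos two_pos _)) hΓp)
      (mul_pos hπ hΓ1)
  -- integrability and comparison of integrals
  have hIl : IntegrableOn
      (fun t => c₁ * t ^ (-(n:ℝ)/2) * Real.exp (-R ^ 2 / (c₂*t)) * t ^ (-1 - s/2))
      (Ioi (0:ℝ)) := aux_int hns hc₂ hR
  have hIu : IntegrableOn
      (fun t => c₃ * t ^ (-(n:ℝ)/2) * Real.exp (-R ^ 2 / (c₄*t)) * t ^ (-1 - s/2))
      (Ioi (0:ℝ)) := aux_int hns hc₄ hR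
  have hbl : ∀ t ∈ Ioi (0:ℝ),
      c₁ * t ^ (-(n:ℝ)/2) * Real.exp (-R ^ 2 / (c₂*t)) * t ^ (-1 - s/2)
        ≤ H x y t * t ^ (-1 - s/2) := fun t ht =>
    mul_le_mul_of_nonneg_right (hHB x y t ht).1 (Real.rpow_nonneg (le_of_lt ht) _)
  have hbu : ∀ t ∈ Ioi (0:ℝ),
      H x y t * t ^ (-1 - s/2)
        ≤ c₃ * t ^ (-(n:ℝ)/2) * Real.exp (-R ^ 2 / (c₄*t)) * t ^ (-1 - s/2) := fun t ht =>
    mul_le_mul_of_nonneg_right (hHB x y t ht).2 (Real.rpow_nonneg (le_of_lt ht) _)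
  have hfl_nonneg : ∀ t ∈ Ioi (0:ℝ),
      0 ≤ c₁ * t ^ (-(n:ℝ)/2) * Real.exp (-R ^ 2 / (c₂*t)) * t ^ (-1 - s/2) := by
    intro t ht
    have ht' : (0:ℝ) < t := ht
    positivity
  have hHm : Measurable fun t : ℝ => H x y t :=
    hHmeas.comp (measurable_const.prodMk (measurable_const.prodMk measurable_id))
  have hIm : IntegrableOn (fun t => H x y t * t ^ (-1 - s/2)) (Ioi (0:ℝ)) := by
    refine Integrable.mono' hIu ?_ ?_
    · exact ((hHm.mul (by fun_prop)).aestronglyMeasurable).restrict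
    · filter_upwards [ae_restrict_mem measurableSet_Ioi] with t ht
      rw [Real.norm_eq_abs, abs_of_nonneg ((hfl_nonneg t ht).trans (hbl t ht))]
      exact hbu t ht
  have h1 := setIntegral_mono_on hIl hIm measurableSet_Ioi hbl
  have h2 := setIntegral_mono_on hIm hIu measurableSet_Ioi hbu
  rw [aux_eq hns hc₂ hR] at h1
  rw [aux_eq hns hc₄ hR] at h2
  have hC : (0:ℝ) ≤ (s/2)/Real.Gamma (1 - s/2) := by positivity
  have hA : (0:ℝ) < (2:ℝ) ^ (-s) := Real.rpow_pos_of_pos two_pos _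
  have h4 : (1:ℝ)/4 ≤ (2:ℝ) ^ (-s) := by
    have : ((2:ℝ) ^ (-2:ℝ)) ≤ 2 ^ (-s) :=
      Real.rpow_le_rpow_of_exponent_le one_le_two (by linarith)
    calc (1:ℝ)/4 = (2:ℝ) ^ (-2:ℝ) := by
          rw [Real.rpow_neg two_pos.le, show ((2:ℝ) ^ (2:ℝ)) = 4 by
            rw [show (2:ℝ) = ((2:ℕ):ℝ) by norm_num, Real.rpow_natCast]; norm_num]
          norm_num
      _ ≤ 2 ^ (-s) := this
  have hA1 : (2:ℝ) ^ (-s) ≤ 1 := by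
    apply Real.rpow_le_one_of_one_le_of_nonpos one_le_two (by linarith)
  constructor
  · calc c₁ * min (c₂ ^ ((n:ℝ)/2)) (c₂ ^ (((n:ℝ)+2)/2)) * Real.pi ^ ((n:ℝ)/2) / 4 *
          (alphaConst n s / R ^ ((n:ℝ)+s))
        ≤ (c₁ * c₂ ^ (((n:ℝ)+s)/2) * Real.pi ^ ((n:ℝ)/2) * (2:ℝ) ^ (-s)) *
            (alphaConst n s / R ^ ((n:ℝ)+s)) := by
          apply mul_le_mul_of_nonneg_right _ (div_nonneg hα.le hRp.le)
          have hmin := rpow_min_le hc₂ (n := n) hs0 hs2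
          nlinarith [mul_le_mul hmin h4 (by norm_num) (Real.rpow_pos_of_pos hc₂ (((n:ℝ)+s)/2)).le,
            mul_pos hc₁ hπ, hm₂, hA]
      _ = (s/2)/Real.Gamma (1 - s/2) *
            (c₁ * Real.Gamma (((n:ℝ)+s)/2) * c₂ ^ (((n:ℝ)+s)/2) / R ^ ((n:ℝ)+s)) :=
          (hid_alpha ⟨hs0, hs2⟩ hR).symm
      _ ≤ (s/2)/Real.Gamma (1 - s/2) * ∫ t in Ioi (0:ℝ), H x y t * t ^ (-1 - s/2) :=
          mul_le_mul_of_nonneg_left h1 hC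
  · calc (s/2)/Real.Gamma (1 - s/2) * ∫ t in Ioi (0:ℝ), H x y t * t ^ (-1 - s/2)
        ≤ (s/2)/Real.Gamma (1 - s/2) *
            (c₃ * Real.Gamma (((n:ℝ)+s)/2) * c₄ ^ (((n:ℝ)+s)/2) / R ^ ((n:ℝ)+s)) :=
          mul_le_mul_of_nonneg_left h2 hC
      _ = (c₃ * c₄ ^ (((n:ℝ)+s)/2) * Real.pi ^ ((n:ℝ)/2) * (2:ℝ) ^ (-s)) *
            (alphaConst n s / R ^ ((n:ℝ)+s)) := hid_alpha ⟨hs0, hs2⟩ hR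
      _ ≤ c₃ * max (c₄ ^ ((n:ℝ)/2)) (c₄ ^ (((n:ℝ)+2)/2)) * Real.pi ^ ((n:ℝ)/2) *
            (alphaConst n s / R ^ ((n:ℝ)+s)) := by
          apply mul_le_mul_of_nonneg_right _ (div_nonneg hα.le hRp.le)
          have hmax := rpow_le_max hc₄ (n := n) hs0 hs2
          nlinarith [mul_pos hc₃ hπ, hA, hA1, (Real.rpow_pos_of_pos hc₄ (((n:ℝ)+s)/2)),
            mul_le_mul hmax hA1 hA.le hm₄.le]
end

section
/- Let s ∈ (0,2) and define G(z,t) := z^s · e^{−z²/(4t)} / (2^s Γ(s/2) t^{1+s/2}) for z > 0, t > 0. Then G satisfies the partial differential equation −∂_t G(z,t) + ((1−s)/z) ∂_z G(z,t) + ∂_{zz} G(z,t) = 0 at every point (z,t) ∈ (0,∞) × (0,∞). -/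
open MeasureTheory Real Set

/-- The subordination kernel `G(z,t) = z^s e^{-z²/(4t)} / (2^s Γ(s/2) t^{1+s/2})` satisfies
`-∂_t G + ((1-s)/z) ∂_z G + ∂_{zz} G = 0` for all `z > 0`, `t > 0`. -/
theorem subordination_kernel_pde (s : ℝ) (hs : s ∈ Ioo (0:ℝ) 2)
    (G : ℝ → ℝ → ℝ)
    (hG : ∀ z t : ℝ, G z t =
      z ^ s * Real.exp (-z ^ 2 / (4 * t)) / (2 ^ s * Real.Gamma (s / 2) * t ^ (1 + s / 2))) :
    ∀ z t : ℝ, 0 < z → 0 < t →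
      -(deriv (fun τ : ℝ => G z τ) t) + ((1 - s) / z) * deriv (fun ζ : ℝ => G ζ t) z +
        deriv (fun ζ : ℝ => deriv (fun ζ' : ℝ => G ζ' t) ζ) z = 0 := by
  obtain ⟨hs0, hs2⟩ := hs
  intro z t hz ht
  set D : ℝ := 2 ^ s * Real.Gamma (s / 2) with hDdef
  have hD : D ≠ 0 :=
    mul_ne_zero (Real.rpow_pos_of_pos two_pos s).ne'
      (Real.Gamma_pos_of_pos (by linarith)).ne'
  have hdenne : D * t ^ (1 + s / 2) ≠ 0 := mul_ne_zero hD (Real.rpow_pos_of_pos ht _).ne'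
  -- time derivative
  have hfrac : HasDerivAt (fun τ : ℝ => -z ^ 2 / (4 * τ)) (z ^ 2 / (4 * t ^ 2)) t := by
    have h4 : HasDerivAt (fun τ : ℝ => 4 * τ) 4 t := by
      simpa using (hasDerivAt_id t).const_mul (4 : ℝ)
    have h := (hasDerivAt_const t (-z ^ 2)).div h4 (by positivity)
    refine h.congr_deriv ?_
    field_simp
    ring
  have hexp_t : HasDerivAt (fun τ : ℝ => Real.exp (-z ^ 2 / (4 * τ)))
      (Real.exp (-z ^ 2 / (4 * t)) * (z ^ 2 / (4 * t ^ 2))) t := hfrac.exp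
  have hnum_t : HasDerivAt (fun τ : ℝ => z ^ s * Real.exp (-z ^ 2 / (4 * τ)))
      (z ^ s * (Real.exp (-z ^ 2 / (4 * t)) * (z ^ 2 / (4 * t ^ 2)))) t :=
    hexp_t.const_mul _
  have hden_t : HasDerivAt (fun τ : ℝ => D * τ ^ (1 + s / 2))
      (D * ((1 + s / 2) * t ^ (1 + s / 2 - 1))) t :=
    (Real.hasDerivAt_rpow_const (Or.inl ht.ne')).const_mul D
  have hGt : HasDerivAt (fun τ : ℝ => G z τ)
      ((z ^ s * (Real.exp (-z ^ 2 / (4 * t)) * (z ^ 2 / (4 * t ^ 2))) * (D * t ^ (1 + s / 2))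
        - z ^ s * Real.exp (-z ^ 2 / (4 * t)) * (D * ((1 + s / 2) * t ^ (1 + s / 2 - 1))))
        / (D * t ^ (1 + s / 2)) ^ 2) t := by
    simpa only [hG, Pi.div_def] using hnum_t.div hden_t hdenne
  -- space derivative (at any ζ > 0)
  have key : ∀ ζ : ℝ, 0 < ζ → HasDerivAt (fun ζ' : ℝ => G ζ' t)
      ((s * ζ ^ (s - 1) - ζ ^ (s + 1) / (2 * t)) * Real.exp (-ζ ^ 2 / (4 * t))
        / (D * t ^ (1 + s / 2))) ζ := by
    intro ζ hζ
    have hinner : HasDerivAt (fun x : ℝ => -x ^ 2 / (4 * t)) (-(2 * ζ) / (4 * t)) ζ := by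
      have h := ((hasDerivAt_pow 2 ζ).neg).div_const (4 * t)
      simpa using h
    have hexp : HasDerivAt (fun x : ℝ => Real.exp (-x ^ 2 / (4 * t)))
        (Real.exp (-ζ ^ 2 / (4 * t)) * (-(2 * ζ) / (4 * t))) ζ := hinner.exp
    have hpow : HasDerivAt (fun x : ℝ => x ^ s) (s * ζ ^ (s - 1)) ζ :=
      Real.hasDerivAt_rpow_const (Or.inl hζ.ne')
    have hmul := (hpow.mul hexp).div_const (D * t ^ (1 + s / 2))
    have heq : (fun x : ℝ => x ^ s * Real.exp (-x ^ 2 / (4 * t)) / (D * t ^ (1 + s / 2)))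
        = fun x : ℝ => G x t := by funext x; rw [hG]
    simp only [Pi.mul_apply] at hmul
    rw [heq] at hmul
    refine hmul.congr_deriv ?_
    rw [Real.rpow_add_one hζ.ne' s]
    field_simp
    ring
  have hderiv_z : deriv (fun ζ : ℝ => G ζ t) z
      = (s * z ^ (s - 1) - z ^ (s + 1) / (2 * t)) * Real.exp (-z ^ 2 / (4 * t))
        / (D * t ^ (1 + s / 2)) := (key z hz).deriv
  -- second space derivative
  have hEq : deriv (fun ζ' : ℝ => G ζ' t) =ᶠ[nhds z] fun ζ =>
      (s * ζ ^ (s - 1) - ζ ^ (s + 1) / (2 * t)) * Real.exp (-ζ ^ 2 / (4 * t))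
        / (D * t ^ (1 + s / 2)) := by
    filter_upwards [eventually_gt_nhds hz] with ζ hζ
    exact (key ζ hζ).deriv
  have hinnerz : HasDerivAt (fun x : ℝ => -x ^ 2 / (4 * t)) (-(2 * z) / (4 * t)) z := by
    have h := ((hasDerivAt_pow 2 z).neg).div_const (4 * t)
    simpa using h
  have hB : HasDerivAt (fun ζ : ℝ =>
      (s * ζ ^ (s - 1) - ζ ^ (s + 1) / (2 * t)) * Real.exp (-ζ ^ 2 / (4 * t))
        / (D * t ^ (1 + s / 2)))
      (((s * ((s - 1) * z ^ (s - 1 - 1)) - (s + 1) * z ^ (s + 1 - 1) / (2 * t))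
          * Real.exp (-z ^ 2 / (4 * t))
        + (s * z ^ (s - 1) - z ^ (s + 1) / (2 * t))
          * (Real.exp (-z ^ 2 / (4 * t)) * (-(2 * z) / (4 * t))))
        / (D * t ^ (1 + s / 2))) z := by
    have h1 : HasDerivAt (fun ζ : ℝ => s * ζ ^ (s - 1))
        (s * ((s - 1) * z ^ (s - 1 - 1))) z :=
      (Real.hasDerivAt_rpow_const (Or.inl hz.ne')).const_mul s
    have h2 : HasDerivAt (fun ζ : ℝ => ζ ^ (s + 1) / (2 * t))
        ((s + 1) * z ^ (s + 1 - 1) / (2 * t)) z :=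
      (Real.hasDerivAt_rpow_const (Or.inl hz.ne')).div_const _
    exact ((h1.sub h2).mul hinnerz.exp).div_const _
  have hderiv_zz : deriv (fun ζ : ℝ => deriv (fun ζ' : ℝ => G ζ' t) ζ) z
      = (((s * ((s - 1) * z ^ (s - 1 - 1)) - (s + 1) * z ^ (s + 1 - 1) / (2 * t))
          * Real.exp (-z ^ 2 / (4 * t))
        + (s * z ^ (s - 1) - z ^ (s + 1) / (2 * t))
          * (Real.exp (-z ^ 2 / (4 * t)) * (-(2 * z) / (4 * t))))
        / (D * t ^ (1 + s / 2))) := by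
    rw [hEq.deriv_eq]
    exact hB.deriv
  rw [hGt.deriv, hderiv_z, hderiv_zz]
  rw [show s - 1 - 1 = s - 2 by ring, show s + 1 - 1 = s by ring,
    show (1 : ℝ) + s / 2 - 1 = s / 2 by ring]
  have e3 : z ^ (s + 1) = z ^ s * z := Real.rpow_add_one hz.ne' s
  have e2 : z ^ s = z ^ (s - 2) * z ^ 2 := by
    rw [← Real.rpow_two, ← Real.rpow_add hz]
    norm_num
  have e1 : z ^ (s - 1) = z ^ (s - 2) * z := by
    rw [show s - 1 = s - 2 + 1 by ring, Real.rpow_add_one hz.ne']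
  have et : t ^ (1 + s / 2) = t ^ (s / 2) * t := by
    rw [show 1 + s / 2 = s / 2 + 1 by ring, Real.rpow_add_one ht.ne']
  rw [e3, e2, e1, et]
  have hzs : z ^ (s - 2) ≠ 0 := (Real.rpow_pos_of_pos hz _).ne'
  have hts : t ^ (s / 2) ≠ 0 := (Real.rpow_pos_of_pos ht _).ne'
  field_simp
  ring
end
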